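/- Let G be a graph with girth at least 4 and let {v₁, ..., v_k} be a total dominating set of G. Define V₁ = N(v₁) and, for i = 2, ..., k, Vᵢ = N(vᵢ) \ (V₁ ∪ ... ∪ V_{i−1}). Then V₁, ..., V_k is a partition of V(G) into (possibly empty) independent sets, each Vᵢ satisfying Vᵢ ⊆ N(vᵢ); hence G admits a cd-coloring with at most k colors. -/

import Mathlib

variable {V : Type*}

/-- A cd-coloring of a connected graph with `q` colors: a proper coloring in which every
nonempty color class is contained in the open neighbourhood of some vertex. -/
def IsCDColoring (G : SimpleGraph V) {q : ℕ} (c : V → Fin q) : Prop :=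
  (∀ a b, G.Adj a b → c a ≠ c b) ∧
    ∀ i : Fin q, (∃ v, c v = i) → ∃ y, ∀ v, c v = i → G.Adj y v

lemma triangle_free_of_egirth {G : SimpleGraph V} (hg : 4 ≤ G.egirth) {a b c : V}
    (hab : G.Adj a b) (hbc : G.Adj b c) (hca : G.Adj c a) : False := by
  have hcyc : (SimpleGraph.Walk.cons hab (SimpleGraph.Walk.cons hbc
      (SimpleGraph.Walk.cons hca SimpleGraph.Walk.nil))).IsCycle := by
    simp [SimpleGraph.Walk.isCycle_def, SimpleGraph.Walk.isTrail_def, hab.ne, hbc.ne,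
      hca.ne, hab.ne', hbc.ne', hca.ne', Sym2.eq, Sym2.rel_iff]
  have := SimpleGraph.le_egirth.mp hg a _ hcyc
  norm_num [SimpleGraph.Walk.length_cons] at this

/-- Greedily peeling off neighbourhoods of a total dominating set of a graph of girth at
least 4 yields a partition into independent sets, each dominated by a vertex; hence a
cd-coloring with at most `k` colors. -/
theorem stmt18 [Fintype V] (G : SimpleGraph V) (hgirth : 4 ≤ G.egirth)
    (k : ℕ) (v : Fin k → V) (htds : ∀ w : V, ∃ i, G.Adj (v i) w)
    (Vs : Fin k → Set V)
    (hVs : ∀ i, Vs i =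
      G.neighborSet (v i) \ ⋃ (j : Fin k) (_ : j < i), G.neighborSet (v j)) :
    (∀ w : V, ∃! i, w ∈ Vs i) ∧
      (∀ i, ∀ a ∈ Vs i, ∀ b ∈ Vs i, ¬ G.Adj a b) ∧
      (∀ i, Vs i ⊆ G.neighborSet (v i)) ∧
      ∃ c : V → Fin k, IsCDColoring G c := by
  classical
  have hmem : ∀ (w : V) (i : Fin k),
      w ∈ Vs i ↔ G.Adj (v i) w ∧ ∀ j, j < i → ¬ G.Adj (v j) w := by
    intro w i
    rw [hVs i]
    simp [Set.mem_diff, Set.mem_iUnion]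
  have part1 : ∀ w : V, ∃! i, w ∈ Vs i := by
    intro w
    obtain ⟨i0, hi0⟩ := htds w
    obtain ⟨i, hs, hm⟩ : ∃ i, G.Adj (v i) w ∧ ∀ j, j < i → ¬ G.Adj (v j) w :=
      ⟨Fin.find (fun i => G.Adj (v i) w) ⟨i0, hi0⟩, Fin.find_spec (p := fun i => G.Adj (v i) w) _,
        fun _ hj => Fin.find_min (p := fun i => G.Adj (v i) w) _ hj⟩
    · refine ⟨i, (hmem w i).mpr ⟨hs, fun j hj => hm j hj⟩, ?_⟩
      intro j hj
      rw [hmem] at hj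
      have hji : ¬ j < i := fun hlt => hm j hlt hj.1
      have hij : ¬ i < j := fun hlt => hj.2 i hlt hs
      omega
  have indep : ∀ i, ∀ a ∈ Vs i, ∀ b ∈ Vs i, ¬ G.Adj a b := by
    intro i a ha b hb hab
    have ha' := ((hmem a i).mp ha).1
    have hb' := ((hmem b i).mp hb).1
    exact triangle_free_of_egirth hgirth ha' hab hb'.symm
  have sub : ∀ i, Vs i ⊆ G.neighborSet (v i) := by
    intro i w hw
    exact ((hmem w i).mp hw).1
  refine ⟨part1, indep, sub, ?_⟩
  refine ⟨fun w => (part1 w).choose, ?_, ?_⟩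
  · intro a b hab hc
    dsimp only at hc
    have ha : a ∈ Vs ((part1 a).choose) := (part1 a).choose_spec.1
    have hb : b ∈ Vs ((part1 b).choose) := (part1 b).choose_spec.1
    rw [hc] at ha
    exact indep _ a ha b hb hab
  · intro i _
    refine ⟨v i, fun w hw => ?_⟩
    dsimp only at hw
    have := (part1 w).choose_spec.1
    rw [hw] at this
    exact ((hmem w i).mp this).1
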